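/- Let n ≥ 3 be an integer and x ≥ 0 a real number. Then the second-order modified Baskakov–Durrmeyer operator reproduces constants and linear functions: V̂_{n,2}(e_0; x) = 1 and V̂_{n,2}(e_1; x) = x, where e_0(t) = 1 and e_1(t) = t (in particular the defining series and integrals converge absolutely). -/

import Mathlib

open MeasureTheory Filter Topology

/-- Baskakov basis function `p_{n,k}(x) = C(n+k-1, k) x^k / (1+x)^{n+k}`. -/
noncomputable def bask (n k : ℕ) (x : ℝ) : ℝ :=
  (Nat.choose (n + k - 1) k : ℝ) * x ^ k / (1 + x) ^ (n + k)

/-- Second-order modified basis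
`p^2_{n,k}(x) = (3/2 + 2x - n x(1+x)) p_{n+2,k}(x) + 2n x(1+x) p_{n+2,k-1}(x)
  + (-1/2 - 2x - n x(1+x)) p_{n+2,k-2}(x)`, with `p_{n+2,j} = 0` for `j < 0`. -/
noncomputable def p2 (n k : ℕ) (x : ℝ) : ℝ :=
  (3 / 2 + 2 * x - (n : ℝ) * x * (1 + x)) * bask (n + 2) k x
    + 2 * (n : ℝ) * x * (1 + x) * (if k = 0 then 0 else bask (n + 2) (k - 1) x)
    + (-(1 / 2) - 2 * x - (n : ℝ) * x * (1 + x)) * (if k < 2 then 0 else bask (n + 2) (k - 2) x)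

/-- Second-order modified Baskakov–Durrmeyer operator. -/
noncomputable def V2 (n : ℕ) (f : ℝ → ℝ) (x : ℝ) : ℝ :=
  ((n : ℝ) - 1) * ∑' k : ℕ, p2 n k x * ∫ t in Set.Ioi (0 : ℝ), bask n k t * f t


lemma Jlem (k : ℕ) : ∀ j : ℕ,
    IntegrableOn (fun t : ℝ => t ^ k / (1 + t) ^ (k + j + 2)) (Set.Ioi 0) ∧
    ∫ t in Set.Ioi (0:ℝ), t ^ k / (1 + t) ^ (k + j + 2)
      = (k.factorial * j.factorial : ℝ) / (k + j + 1).factorial := by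
  induction k with
  | zero =>
    intro j
    have hderiv : ∀ t ∈ Set.Ici (0:ℝ),
        HasDerivAt (fun t : ℝ => -(((1 + t) ^ (j + 1))⁻¹ / (j + 1)))
          ((fun t : ℝ => t ^ 0 / (1 + t) ^ (0 + j + 2)) t) t := by
      intro t ht
      have h1 : (0:ℝ) < 1 + t := by simp at ht; linarith
      have h : HasDerivAt (fun t : ℝ => (1 + t) ^ (j + 1)) ((j+1) * (1+t)^j) t := by
        have := ((hasDerivAt_id t).const_add 1).fun_pow (j+1)
        simpa [mul_comm, mul_assoc] using this
      have h2 := (h.inv (by positivity)).div_const ((j:ℝ)+1)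
      have h3 : HasDerivAt (fun t : ℝ => -(((1 + t) ^ (j + 1))⁻¹ / ((j:ℝ) + 1)))
          (-(-((↑j + 1) * (1 + t) ^ j) / ((1 + t) ^ (j + 1)) ^ 2 / (↑j + 1))) t := h2.neg
      convert h3 using 1
      have hj : ((j:ℝ)+1) ≠ 0 := by positivity
      field_simp
      ring
    have hpos : ∀ t ∈ Set.Ioi (0:ℝ), 0 ≤ (fun t : ℝ => t ^ 0 / (1 + t) ^ (0 + j + 2)) t := by
      intro t ht
      simp only [Set.mem_Ioi] at ht
      positivity
    have htend : Tendsto (fun t : ℝ => -(((1 + t) ^ (j + 1))⁻¹ / (j + 1))) atTop (𝓝 0) := by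
      have h1 : Tendsto (fun t : ℝ => (1 + t) ^ (j + 1)) atTop atTop :=
        (tendsto_pow_atTop (by omega)).comp (tendsto_atTop_add_const_left atTop 1 tendsto_id)
      have := (h1.inv_tendsto_atTop).div_const ((j:ℝ)+1)
      simpa using this.neg
    constructor
    · exact integrableOn_Ioi_deriv_of_nonneg' hderiv hpos htend
    · rw [integral_Ioi_of_hasDerivAt_of_nonneg' hderiv hpos htend]
      simp [Nat.factorial]
      field_simp
  | succ k ih =>
    intro j
    have h1 := ih j
    have h2 := ih (j + 1)
    have heq : ∀ t ∈ Set.Ioi (0:ℝ), t ^ (k+1) / (1 + t) ^ (k + 1 + j + 2)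
        = t ^ k / (1 + t) ^ (k + j + 2) - t ^ k / (1 + t) ^ (k + (j+1) + 2) := by
      intro t ht
      simp only [Set.mem_Ioi] at ht
      have h0 : (0:ℝ) < 1 + t := by linarith
      have e1 : k + 1 + j + 2 = (k + j + 2) + 1 := by omega
      have e2 : k + (j+1) + 2 = (k + j + 2) + 1 := by omega
      rw [e1, e2, pow_succ, pow_succ]
      field_simp
      ring
    constructor
    · exact IntegrableOn.congr_fun (h1.1.sub h2.1) (fun t ht => (heq t ht).symm) measurableSet_Ioi
    · rw [setIntegral_congr_fun measurableSet_Ioi heq, integral_sub h1.1 h2.1, h1.2, h2.2]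
      have e3 : k + (j+1) + 1 = (k + j + 1) + 1 := by omega
      have e4 : k + 1 + j + 1 = (k + j + 1) + 1 := by omega
      rw [e3, e4]
      have hf1 : ((k + j + 1).factorial : ℝ) ≠ 0 := by positivity
      rw [Nat.factorial_succ (k+j+1), Nat.factorial_succ k, Nat.factorial_succ j]
      push_cast
      field_simp
      ring

lemma bask_eq_one (m k : ℕ) : ∀ t : ℝ, bask (m+3) k t * 1
    = ((m+2+k).choose k : ℝ) * (t ^ k / (1 + t) ^ (k + (m+1) + 2)) := by
  intro t
  unfold bask
  have e1 : m + 3 + k - 1 = m + 2 + k := by omega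
  have e2 : m + 3 + k = k + (m+1) + 2 := by omega
  rw [e1, e2, mul_one, mul_div_assoc]

lemma bask_eq_t (m k : ℕ) : ∀ t : ℝ, bask (m+3) k t * t
    = ((m+2+k).choose k : ℝ) * (t ^ (k+1) / (1 + t) ^ ((k+1) + m + 2)) := by
  intro t
  unfold bask
  have e1 : m + 3 + k - 1 = m + 2 + k := by omega
  have e2 : m + 3 + k = (k+1) + m + 2 := by omega
  rw [e1, e2, pow_succ]
  ring

lemma bask_integrable_one (m k : ℕ) :
    IntegrableOn (fun t : ℝ => bask (m+3) k t * 1) (Set.Ioi 0) := by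
  have := ((Jlem k (m+1)).1.const_mul ((m+2+k).choose k : ℝ))
  exact IntegrableOn.congr_fun this (fun t _ => (bask_eq_one m k t).symm) measurableSet_Ioi

lemma bask_integrable_t (m k : ℕ) :
    IntegrableOn (fun t : ℝ => bask (m+3) k t * t) (Set.Ioi 0) := by
  have := ((Jlem (k+1) m).1.const_mul ((m+2+k).choose k : ℝ))
  exact IntegrableOn.congr_fun this (fun t _ => (bask_eq_t m k t).symm) measurableSet_Ioi

lemma choose_fact (m k : ℕ) :
    ((m+2+k).choose k : ℝ) * k.factorial * (m+2).factorial = (k+m+2).factorial := by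
  have := Nat.add_choose_mul_factorial_mul_factorial (m+2) k
  have e : m + 2 + k = k + m + 2 := by omega
  rw [e] at this ⊢
  have := congrArg (Nat.cast (R := ℝ)) this
  push_cast at this ⊢
  linarith

lemma bask_integral_one (m k : ℕ) :
    ∫ t in Set.Ioi (0:ℝ), bask (m+3) k t * 1 = ((m:ℝ)+2)⁻¹ := by
  rw [setIntegral_congr_fun measurableSet_Ioi (fun t _ => bask_eq_one m k t),
    integral_const_mul, (Jlem k (m+1)).2]
  have e : k + (m+1) + 1 = k + m + 2 := by omega
  rw [e]
  have h := choose_fact m k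
  have h1 : ((k+m+2).factorial : ℝ) ≠ 0 := by positivity
  have h2 : ((k).factorial : ℝ) ≠ 0 := by positivity
  have h3 : (((m+1)).factorial : ℝ) ≠ 0 := by positivity
  have h4 : ((m+2).factorial : ℝ) = ((m:ℝ)+2) * (m+1).factorial := by
    rw [show m+2 = (m+1)+1 by omega, Nat.factorial_succ]; push_cast; ring
  rw [h4] at h
  field_simp
  nlinarith [h]

lemma bask_integral_t (m k : ℕ) :
    ∫ t in Set.Ioi (0:ℝ), bask (m+3) k t * t
      = ((k:ℝ)+1) * (((m:ℝ)+2) * ((m:ℝ)+1))⁻¹ := by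
  rw [setIntegral_congr_fun measurableSet_Ioi (fun t _ => bask_eq_t m k t),
    integral_const_mul, (Jlem (k+1) m).2]
  have e : k + 1 + m + 1 = k + m + 2 := by omega
  rw [e]
  have h := choose_fact m k
  have h1 : ((k+m+2).factorial : ℝ) ≠ 0 := by positivity
  have h2 : ((k).factorial : ℝ) ≠ 0 := by positivity
  have h3 : ((m).factorial : ℝ) ≠ 0 := by positivity
  have h4 : ((m+2).factorial : ℝ) = ((m:ℝ)+2) * (((m:ℝ)+1) * m.factorial) := by
    rw [show m+2 = (m+1)+1 by omega, Nat.factorial_succ, Nat.factorial_succ]; push_cast; ring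
  have h5 : ((k+1).factorial : ℝ) = ((k:ℝ)+1) * k.factorial := by
    rw [Nat.factorial_succ]; push_cast; ring
  rw [h4] at h
  rw [h5]
  field_simp
  nlinarith [h]

lemma hasSum_bask (m : ℕ) (hm : 1 ≤ m) (x : ℝ) (hx : 0 ≤ x) :
    HasSum (fun k => bask m k x) 1 := by
  have hx1 : (0:ℝ) < 1 + x := by linarith
  set r : ℝ := x / (1 + x) with hr
  have hrn : ‖r‖ < 1 := by
    rw [Real.norm_eq_abs, abs_of_nonneg (by positivity)]
    rw [div_lt_one hx1]; linarith
  have h := (hasSum_choose_mul_geometric_of_norm_lt_one (m-1) hrn).mul_right ((1+x)^m)⁻¹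
  have e1 : m - 1 + 1 = m := by omega
  rw [e1] at h
  have heq : (fun k : ℕ => ((k + (m-1)).choose (m-1) : ℝ) * r ^ k * ((1+x)^m)⁻¹)
      = fun k => bask m k x := by
    funext k
    unfold bask
    have e2 : m + k - 1 = k + (m - 1) := by omega
    rw [e2]
    have e3 : (k + (m-1)).choose (m-1) = (k + (m-1)).choose k := by
      simpa using (Nat.choose_symm (Nat.le_add_left (m-1) k)).symm
    rw [e3, hr, div_pow, show m + k = k + m by omega, pow_add]
    rw [mul_comm ((1+x)^k)]
    field_simp
  rw [heq] at h
  convert h using 1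
  · rfl
  have h1r : 1 - r = (1+x)⁻¹ := by rw [hr]; field_simp; ring
  rw [h1r]
  field_simp
  rw [one_div, inv_pow, inv_mul_cancel₀ (by positivity)]

lemma hasSum_k_bask (m : ℕ) (hm : 1 ≤ m) (x : ℝ) (hx : 0 ≤ x) :
    HasSum (fun k : ℕ => (k : ℝ) * bask m k x) ((m : ℝ) * x) := by
  have hx1 : (0:ℝ) < 1 + x := by linarith
  have hb := (hasSum_bask (m+1) (by omega) x hx).mul_left ((m:ℝ) * x)
  have key : ∀ n : ℕ, ((n+1 : ℕ) : ℝ) * bask m (n+1) x = (m:ℝ) * x * bask (m+1) n x := by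
    intro n
    unfold bask
    have e1 : m + (n+1) - 1 = m + n := by omega
    have e2 : m + 1 + n - 1 = m + n := by omega
    rw [e1, e2]
    have hc : ((m+n).choose (n+1) : ℝ) * ((n:ℝ)+1) = ((m+n).choose n : ℝ) * m := by
      have := Nat.choose_succ_right_eq (m+n) n
      rw [show m + n - n = m by omega] at this
      exact_mod_cast congrArg (Nat.cast (R := ℝ)) this
    have e4 : m + (n+1) = (m + 1 + n) := by omega
    rw [e4, pow_succ]
    push_cast
    field_simp
    linear_combination x ^ n * x * hc
  have h2 : HasSum (fun n : ℕ => ((n+1 : ℕ) : ℝ) * bask m (n+1) x) ((m:ℝ) * x * 1) := by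
    exact HasSum.congr_fun hb (fun n => key n)
  have h3 := (hasSum_nat_add_iff (f := fun k : ℕ => (k:ℝ) * bask m k x) 1).mp h2
  simpa using h3

lemma hasSum_shift {f : ℕ → ℝ} {a : ℝ} (j : ℕ) (h : HasSum f a) :
    HasSum (fun k => if k < j then 0 else f (k - j)) a := by
  set g : ℕ → ℝ := fun k => if k < j then 0 else f (k - j) with hg
  have h1 : HasSum (fun n => g (n + j)) a := by
    apply h.congr_fun
    intro n
    simp [hg, Nat.add_sub_cancel]
  have h2 := (hasSum_nat_add_iff (f := g) j).mp h1
  have h3 : ∑ i ∈ Finset.range j, g i = 0 := by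
    apply Finset.sum_eq_zero
    intro i hi
    simp only [Finset.mem_range] at hi
    simp [hg, hi]
  rwa [h3, add_zero] at h2

lemma hasSum_kp1_bask (m : ℕ) (hm : 1 ≤ m) (x : ℝ) (hx : 0 ≤ x) (c : ℝ) :
    HasSum (fun k : ℕ => ((k : ℝ) + c) * bask m k x) ((m : ℝ) * x + c) := by
  have h := (hasSum_k_bask m hm x hx).add ((hasSum_bask m hm x hx).mul_left c)
  rw [mul_one] at h
  exact h.congr_fun (fun k => add_mul ((k:ℝ)) c (bask m k x))

set_option maxHeartbeats 2000000 in
lemma hasSum_p2 (n : ℕ) (x : ℝ) (hx : 0 ≤ x) : HasSum (fun k => p2 n k x) 1 := by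
  have hb := hasSum_bask (n+2) (by omega) x hx
  have hs1 : HasSum (fun k : ℕ => if k = 0 then 0 else bask (n+2) (k-1) x) 1 := by
    have := hasSum_shift 1 hb
    apply this.congr_fun
    intro k
    simp [Nat.lt_one_iff]
  have hs2 : HasSum (fun k : ℕ => if k < 2 then 0 else bask (n+2) (k-2) x) 1 :=
    hasSum_shift 2 hb
  have h := ((hb.mul_left (3 / 2 + 2 * x - (n : ℝ) * x * (1 + x))).add
    (hs1.mul_left (2 * (n : ℝ) * x * (1 + x)))).add
    (hs2.mul_left (-(1 / 2) - 2 * x - (n : ℝ) * x * (1 + x)))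
  have : (3 / 2 + 2 * x - (n : ℝ) * x * (1 + x)) * 1 + 2 * (n : ℝ) * x * (1 + x) * 1
      + (-(1 / 2) - 2 * x - (n : ℝ) * x * (1 + x)) * 1 = 1 := by ring
  rw [this] at h
  exact h.congr_fun (fun k => by rw [p2])

set_option maxHeartbeats 2000000 in
lemma hasSum_kp1_p2 (n : ℕ) (x : ℝ) (hx : 0 ≤ x) :
    HasSum (fun k : ℕ => ((k : ℝ) + 1) * p2 n k x) (((n : ℝ) - 2) * x) := by
  have hb := hasSum_kp1_bask (n+2) (by omega) x hx 1
  have hs1 : HasSum (fun k : ℕ => ((k:ℝ)+1) * (if k = 0 then 0 else bask (n+2) (k-1) x))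
      (((n:ℝ)+2) * x + 2) := by
    have h0 := hasSum_shift 1 (hasSum_kp1_bask (n+2) (by omega) x hx 2)
    push_cast at h0
    apply h0.congr_fun
    intro k
    match k with
    | 0 => simp
    | Nat.succ j =>
      rw [if_neg (by omega : ¬ (j+1 < 1)), if_neg (Nat.succ_ne_zero j), Nat.succ_sub_one]
      push_cast; ring
  have hs2 : HasSum (fun k : ℕ => ((k:ℝ)+1) * (if k < 2 then 0 else bask (n+2) (k-2) x))
      (((n:ℝ)+2) * x + 3) := by
    have h0 := hasSum_shift 2 (hasSum_kp1_bask (n+2) (by omega) x hx 3)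
    push_cast at h0
    apply h0.congr_fun
    intro k
    match k with
    | 0 => simp
    | 1 => simp
    | Nat.succ (Nat.succ j) =>
      have : ¬ (j + 1 + 1 < 2) := by omega
      simp only [this, if_false, Nat.add_sub_cancel]
      push_cast
      ring
  have h := ((hb.mul_left (3 / 2 + 2 * x - (n : ℝ) * x * (1 + x))).add
    (hs1.mul_left (2 * (n : ℝ) * x * (1 + x)))).add
    (hs2.mul_left (-(1 / 2) - 2 * x - (n : ℝ) * x * (1 + x)))
  push_cast at h
  have heq : (3 / 2 + 2 * x - (n : ℝ) * x * (1 + x)) * (((n:ℝ)+2) * x + 1)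
      + 2 * (n : ℝ) * x * (1 + x) * (((n:ℝ)+2) * x + 2)
      + (-(1 / 2) - 2 * x - (n : ℝ) * x * (1 + x)) * (((n:ℝ)+2) * x + 3)
      = ((n : ℝ) - 2) * x := by ring
  rw [heq] at h
  exact h.congr_fun (fun k => by rw [p2]; ring)


theorem V2_reproduces_linear (n : ℕ) (hn : 3 ≤ n) (x : ℝ) (hx : 0 ≤ x) :
    (∀ k : ℕ, IntegrableOn (fun t : ℝ => bask n k t * (1 : ℝ)) (Set.Ioi 0)) ∧
    (∀ k : ℕ, IntegrableOn (fun t : ℝ => bask n k t * t) (Set.Ioi 0)) ∧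
    Summable (fun k : ℕ =>
      |p2 n k x * ∫ t in Set.Ioi (0 : ℝ), bask n k t * (1 : ℝ)|) ∧
    Summable (fun k : ℕ =>
      |p2 n k x * ∫ t in Set.Ioi (0 : ℝ), bask n k t * t|) ∧
    V2 n (fun _ => (1 : ℝ)) x = 1 ∧ V2 n (fun t => t) x = x := by
  obtain ⟨m, rfl⟩ : ∃ m, n = m + 3 := ⟨n - 3, by omega⟩
  have hm2 : ((m:ℝ) + 2) ≠ 0 := by positivity
  have hm1 : ((m:ℝ) + 1) ≠ 0 := by positivity
  refine ⟨fun k => bask_integrable_one m k, fun k => bask_integrable_t m k, ?_, ?_, ?_, ?_⟩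
  · simp only [bask_integral_one]
    exact ((hasSum_p2 (m+3) x hx).summable.mul_right _).abs
  · simp only [bask_integral_t]
    have h := (((hasSum_kp1_p2 (m+3) x hx).summable.mul_right
      ((((m:ℝ)+2) * ((m:ℝ)+1))⁻¹))).abs
    exact h.congr (fun k => congrArg abs (by ring))
  · rw [V2]
    simp only [bask_integral_one]
    rw [tsum_mul_right, (hasSum_p2 (m+3) x hx).tsum_eq]
    push_cast
    field_simp
    ring
  · rw [V2]
    simp only [bask_integral_t]
    have he : ∀ k : ℕ, p2 (m+3) k x * (((k:ℝ)+1) * (((m:ℝ)+2) * ((m:ℝ)+1))⁻¹)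
        = (((k:ℝ)+1) * p2 (m+3) k x) * ((((m:ℝ)+2) * ((m:ℝ)+1))⁻¹) := fun k => by ring
    rw [tsum_congr he, tsum_mul_right, (hasSum_kp1_p2 (m+3) x hx).tsum_eq]
    push_cast
    field_simp
    ring
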